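/- Let T be a left linear track category with linearity tracks Γ satisfying the linearity track equations, and define Γ(n)_a := Γ_a^{1,…,1} : a(n·1) ⇒ n·a for n ≥ 1 (iterated linearity track at n copies of the identity). Then for all m, n ≥ 1 and any morphism a : A → B, Γ(mn)_a = (m·1_B) Γ(n)_a ∘ Γ(m)_a (n·1_A). -/

import Mathlib

/-! A *left linear track category*: a track category (category enriched in groupoids)
whose hom-groupoids are abelian group objects in groupoids, with strictly left linear
composition (and pointed).  Tracks are encoded non-dependently, with source `src = δ₀`
and target `tgt = δ₁`; `vcomp α β` is the vertical composite `α □ β` (first `β`, then `α`);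
`wl a α = a ⊗ α` and `wr α x = α ⊗ x` are the whiskerings. -/
structure LLTrackCat (Obj : Type u) (Hom : Obj → Obj → Type v) (Trk : Obj → Obj → Type w)
    [∀ A B : Obj, AddCommGroup (Hom A B)] [∀ A B : Obj, AddCommGroup (Trk A B)] where
  src : ∀ {A B : Obj}, Trk A B → Hom A B
  tgt : ∀ {A B : Obj}, Trk A B → Hom A B
  vid : ∀ {A B : Obj}, Hom A B → Trk A B
  vcomp : ∀ {A B : Obj}, Trk A B → Trk A B → Trk A B
  vinv : ∀ {A B : Obj}, Trk A B → Trk A B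
  one : ∀ A : Obj, Hom A A
  comp : ∀ {A B C : Obj}, Hom B C → Hom A B → Hom A C
  wl : ∀ {A B C : Obj}, Hom B C → Trk A B → Trk A C
  wr : ∀ {A B C : Obj}, Trk B C → Hom A B → Trk A C
  -- each hom-groupoid is a groupoid
  src_vid : ∀ {A B : Obj} (x : Hom A B), src (vid x) = x
  tgt_vid : ∀ {A B : Obj} (x : Hom A B), tgt (vid x) = x
  src_vcomp : ∀ {A B : Obj} (α β : Trk A B), src α = tgt β → src (vcomp α β) = src β
  tgt_vcomp : ∀ {A B : Obj} (α β : Trk A B), src α = tgt β → tgt (vcomp α β) = tgt α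
  vcomp_assoc : ∀ {A B : Obj} (α β γ : Trk A B), src α = tgt β → src β = tgt γ →
    vcomp (vcomp α β) γ = vcomp α (vcomp β γ)
  vcomp_vid : ∀ {A B : Obj} (α : Trk A B), vcomp α (vid (src α)) = α
  vid_vcomp : ∀ {A B : Obj} (α : Trk A B), vcomp (vid (tgt α)) α = α
  src_vinv : ∀ {A B : Obj} (α : Trk A B), src (vinv α) = tgt α
  tgt_vinv : ∀ {A B : Obj} (α : Trk A B), tgt (vinv α) = src α
  vcomp_vinv : ∀ {A B : Obj} (α : Trk A B), vcomp α (vinv α) = vid (tgt α)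
  vinv_vcomp : ∀ {A B : Obj} (α : Trk A B), vcomp (vinv α) α = vid (src α)
  -- each hom-groupoid is an abelian group object: the structure maps are additive
  src_add : ∀ {A B : Obj} (α β : Trk A B), src (α + β) = src α + src β
  tgt_add : ∀ {A B : Obj} (α β : Trk A B), tgt (α + β) = tgt α + tgt β
  vid_add : ∀ {A B : Obj} (x y : Hom A B), vid (x + y) = vid x + vid y
  interchange : ∀ {A B : Obj} (α α' β β' : Trk A B), src α = tgt β → src α' = tgt β' →
    vcomp (α + α') (β + β') = vcomp α β + vcomp α' β'
  -- underlying category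
  comp_assoc : ∀ {A B C D : Obj} (a : Hom C D) (b : Hom B C) (c : Hom A B),
    comp (comp a b) c = comp a (comp b c)
  one_comp : ∀ {A B : Obj} (x : Hom A B), comp (one B) x = x
  comp_one : ∀ {A B : Obj} (x : Hom A B), comp x (one A) = x
  -- whiskering axioms
  src_wl : ∀ {A B C : Obj} (a : Hom B C) (α : Trk A B), src (wl a α) = comp a (src α)
  tgt_wl : ∀ {A B C : Obj} (a : Hom B C) (α : Trk A B), tgt (wl a α) = comp a (tgt α)
  src_wr : ∀ {A B C : Obj} (α : Trk B C) (x : Hom A B), src (wr α x) = comp (src α) x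
  tgt_wr : ∀ {A B C : Obj} (α : Trk B C) (x : Hom A B), tgt (wr α x) = comp (tgt α) x
  wl_vid : ∀ {A B C : Obj} (a : Hom B C) (x : Hom A B), wl a (vid x) = vid (comp a x)
  wr_vid : ∀ {A B C : Obj} (a : Hom B C) (x : Hom A B), wr (vid a) x = vid (comp a x)
  wl_vcomp : ∀ {A B C : Obj} (a : Hom B C) (α β : Trk A B), src α = tgt β →
    wl a (vcomp α β) = vcomp (wl a α) (wl a β)
  wr_vcomp : ∀ {A B C : Obj} (α β : Trk B C) (x : Hom A B), src α = tgt β →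
    wr (vcomp α β) x = vcomp (wr α x) (wr β x)
  wl_wl : ∀ {A B C D : Obj} (a : Hom C D) (b : Hom B C) (α : Trk A B),
    wl a (wl b α) = wl (comp a b) α
  wr_wr : ∀ {A B C D : Obj} (α : Trk C D) (x : Hom B C) (y : Hom A B),
    wr (wr α x) y = wr α (comp x y)
  wl_wr : ∀ {A B C D : Obj} (a : Hom C D) (α : Trk B C) (x : Hom A B),
    wr (wl a α) x = wl a (wr α x)
  wl_one : ∀ {A B : Obj} (α : Trk A B), wl (one B) α = α
  wr_one : ∀ {A B : Obj} (α : Trk A B), wr α (one A) = α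
  -- the two factorizations of the horizontal composite of two tracks agree
  htw : ∀ {A B C : Obj} (α : Trk B C) (β : Trk A B),
    vcomp (wr α (tgt β)) (wl (src α) β) = vcomp (wl (tgt α) β) (wr α (src β))
  -- composition is strictly left linear
  comp_add_left : ∀ {A B C : Obj} (a a' : Hom B C) (x : Hom A B),
    comp (a + a') x = comp a x + comp a' x
  wl_add_left : ∀ {A B C : Obj} (a a' : Hom B C) (α : Trk A B),
    wl (a + a') α = wl a α + wl a' α
  wr_add_left : ∀ {A B C : Obj} (α α' : Trk B C) (x : Hom A B),
    wr (α + α') x = wr α x + wr α' x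
  -- pointedness
  comp_zero : ∀ {A B C : Obj} (a : Hom B C), comp a (0 : Hom A B) = 0
  wl_zero : ∀ {A B C : Obj} (a : Hom B C), wl a (0 : Trk A B) = 0
  wr_zero : ∀ {A B C : Obj} (α : Trk B C), wr α (0 : Hom A B) = vid 0

/-- A system of linearity tracks `Γ a x y : a(x+y) ⇒ ax + ay` satisfying the
linearity track equations of Definition 3.3 (precomposition, postcomposition,
symmetry, left linearity, associativity, and naturality in both variables). -/
structure LinTracks {Obj : Type u} {Hom : Obj → Obj → Type v} {Trk : Obj → Obj → Type w}
    [∀ A B : Obj, AddCommGroup (Hom A B)] [∀ A B : Obj, AddCommGroup (Trk A B)]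
    (T : LLTrackCat Obj Hom Trk) where
  Γ : ∀ {X A B : Obj}, Hom A B → Hom X A → Hom X A → Trk X B
  src_Γ : ∀ {X A B : Obj} (a : Hom A B) (x y : Hom X A),
    T.src (Γ a x y) = T.comp a (x + y)
  tgt_Γ : ∀ {X A B : Obj} (a : Hom A B) (x y : Hom X A),
    T.tgt (Γ a x y) = T.comp a x + T.comp a y
  precomp : ∀ {Y X A B : Obj} (a : Hom A B) (x y : Hom X A) (z : Hom Y X),
    Γ a (T.comp x z) (T.comp y z) = T.wr (Γ a x y) z
  postcomp : ∀ {X A B C : Obj} (b : Hom B C) (a : Hom A B) (x y : Hom X A),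
    Γ (T.comp b a) x y = T.vcomp (Γ b (T.comp a x) (T.comp a y)) (T.wl b (Γ a x y))
  symm : ∀ {X A B : Obj} (a : Hom A B) (x y : Hom X A), Γ a x y = Γ a y x
  leftlin : ∀ {X A B : Obj} (a a' : Hom A B) (x y : Hom X A),
    Γ (a + a') x y = Γ a x y + Γ a' x y
  assocΓ : ∀ {X A B : Obj} (a : Hom A B) (x y z : Hom X A),
    T.vcomp (Γ a x y + T.vid (T.comp a z)) (Γ a (x + y) z)
      = T.vcomp (T.vid (T.comp a x) + Γ a y z) (Γ a x (y + z))
  natxy : ∀ {X A B : Obj} (a : Hom A B) (G H : Trk X A),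
    T.vcomp (T.wl a G + T.wl a H) (Γ a (T.src G) (T.src H))
      = T.vcomp (Γ a (T.tgt G) (T.tgt H)) (T.wl a (G + H))
  nata : ∀ {X A B : Obj} (α : Trk A B) (x y : Hom X A),
    T.vcomp (T.wr α x + T.wr α y) (Γ (T.src α) x y)
      = T.vcomp (Γ (T.tgt α) x y) (T.wr α (x + y))

/-- The iterated linearity track `Γ(n)_a = Γ_a^{1,…,1} : a(n·1) ⇒ n·a`
(with `n` copies of the identity), defined inductively by
`Γ_a^{x₁,…,xₙ} = (Γ_a^{x₁,…,x_{n-1}} + a xₙ) ∘ Γ_a^{x₁+⋯+x_{n-1},xₙ}`,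
with `Γ_a^{x₁} = id` (and `Γ(0)_a = id₀`). -/
def GN {Obj : Type u} {Hom : Obj → Obj → Type v} {Trk : Obj → Obj → Type w}
    [∀ A B : Obj, AddCommGroup (Hom A B)] [∀ A B : Obj, AddCommGroup (Trk A B)]
    (T : LLTrackCat Obj Hom Trk) (L : LinTracks T)
    {A B : Obj} (a : Hom A B) : ℕ → Trk A B
  | 0 => T.vid 0
  | 1 => T.vid a
  | (n + 2) =>
      T.vcomp (GN T L a (n + 1) + T.vid (T.comp a (T.one A)))
        (L.Γ a ((n + 1) • T.one A) (T.one A))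


section Helpers

variable {Obj : Type u} {Hom : Obj → Obj → Type v} {Trk : Obj → Obj → Type w}
  [∀ A B : Obj, AddCommGroup (Hom A B)] [∀ A B : Obj, AddCommGroup (Trk A B)]
  (T : LLTrackCat Obj Hom Trk) (L : LinTracks T)

lemma LL_comp_smul_left {A B C : Obj} (m : ℕ) (b : Hom B C) (x : Hom A B) :
    T.comp (m • b) x = m • T.comp b x :=
  (AddMonoidHom.mk' (fun c => T.comp c x) (fun c c' => T.comp_add_left c c' x)).map_nsmul m b

lemma LL_comp_smul_one {A B : Obj} (m : ℕ) (x : Hom A B) :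
    T.comp (m • T.one B) x = m • x := by
  rw [LL_comp_smul_left, T.one_comp]

lemma LL_wl_smul_one {A B : Obj} (m : ℕ) (α : Trk A B) :
    T.wl (m • T.one B) α = m • α := by
  have h := (AddMonoidHom.mk' (fun c => T.wl c α)
    (fun c c' => T.wl_add_left c c' α)).map_nsmul m (T.one B)
  simpa [T.wl_one] using h

end Helpers

lemma src_GN {Obj : Type u} {Hom : Obj → Obj → Type v} {Trk : Obj → Obj → Type w}
    [∀ A B : Obj, AddCommGroup (Hom A B)] [∀ A B : Obj, AddCommGroup (Trk A B)]
    (T : LLTrackCat Obj Hom Trk) (L : LinTracks T) {A B : Obj} (a : Hom A B) :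
    ∀ n : ℕ, T.src (GN T L a n) = T.comp a (n • T.one A)
  | 0 => by simp [GN, T.src_vid, T.comp_zero]
  | 1 => by simp [GN, T.src_vid, T.comp_one]
  | (n + 2) => by
    rw [GN, T.src_vcomp _ _
      (by rw [T.src_add, src_GN T L a (n + 1), T.src_vid, L.tgt_Γ]),
      L.src_Γ, ← succ_nsmul]

lemma tgt_GN {Obj : Type u} {Hom : Obj → Obj → Type v} {Trk : Obj → Obj → Type w}
    [∀ A B : Obj, AddCommGroup (Hom A B)] [∀ A B : Obj, AddCommGroup (Trk A B)]
    (T : LLTrackCat Obj Hom Trk) (L : LinTracks T) {A B : Obj} (a : Hom A B) :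
    ∀ n : ℕ, T.tgt (GN T L a n) = n • a
  | 0 => by simp [GN, T.tgt_vid]
  | 1 => by simp [GN, T.tgt_vid]
  | (n + 2) => by
    rw [GN, T.tgt_vcomp _ _
      (by rw [T.src_add, src_GN T L a (n + 1), T.src_vid, L.tgt_Γ]),
      T.tgt_add, tgt_GN T L a (n + 1), T.tgt_vid, T.comp_one, ← succ_nsmul]

section Helpers2

variable {Obj : Type u} {Hom : Obj → Obj → Type v} {Trk : Obj → Obj → Type w}
  [∀ A B : Obj, AddCommGroup (Hom A B)] [∀ A B : Obj, AddCommGroup (Trk A B)]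
  (T : LLTrackCat Obj Hom Trk) (L : LinTracks T)

lemma GN_succ {A B : Obj} (a : Hom A B) (n : ℕ) (hn : 1 ≤ n) :
    GN T L a (n + 1) = T.vcomp (GN T L a n + T.vid (T.comp a (T.one A)))
      (L.Γ a (n • T.one A) (T.one A)) := by
  obtain ⟨k, rfl⟩ := Nat.exists_eq_succ_of_ne_zero (by omega : n ≠ 0)
  rfl

lemma gn_add {A B : Obj} (a : Hom A B) (p q : ℕ) (hp : 1 ≤ p) (hq : 1 ≤ q) :
    GN T L a (p + q) = T.vcomp (GN T L a p + GN T L a q)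
      (L.Γ a (p • T.one A) (q • T.one A)) := by
  induction q, hq using Nat.le_induction with
  | base =>
    rw [GN_succ T L a p hp, one_smul]
    simp [GN, T.comp_one]
  | succ q hq ih =>
    rw [show p + (q + 1) = (p + q) + 1 from rfl, GN_succ T L a (p + q) (by omega),
      ih, add_nsmul]
    have hvid : T.vid (T.comp a (T.one A))
        = T.vcomp (T.vid (T.comp a (T.one A))) (T.vid (T.comp a (T.one A))) := by
      conv_lhs => rw [← T.vcomp_vid (T.vid (T.comp a (T.one A))), T.src_vid]
    rw [hvid, ← T.interchange _ _ _ _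
      (by rw [T.src_add, src_GN, src_GN, L.tgt_Γ]) (by rw [T.src_vid, T.tgt_vid])]
    rw [T.vcomp_assoc _ _ _
      (by rw [T.src_add, T.src_add, T.src_vid, src_GN, src_GN, T.tgt_add, L.tgt_Γ,
        T.tgt_vid])
      (by rw [T.src_add, T.src_vid, L.src_Γ, L.tgt_Γ])]
    rw [L.assocΓ a (p • T.one A) (q • T.one A) (T.one A)]
    rw [← T.vcomp_assoc _ _ _
      (by rw [T.src_add, T.src_add, T.src_vid, src_GN, src_GN, T.tgt_add, T.tgt_vid,
        L.tgt_Γ]; abel)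
      (by rw [T.src_add, T.src_vid, L.src_Γ, L.tgt_Γ])]
    rw [add_assoc, T.interchange _ _ _ _
      (by rw [src_GN, T.tgt_vid]) (by rw [T.src_add, src_GN, T.src_vid, L.tgt_Γ])]
    rw [← GN_succ T L a q hq]
    have hfix : T.vcomp (GN T L a p) (T.vid (T.comp a (p • T.one A))) = GN T L a p := by
      conv_lhs => rw [← src_GN T L a p]
      exact T.vcomp_vid _
    rw [hfix, ← succ_nsmul]

lemma vcomp_add_right {A B : Obj} (α β γ : Trk A B) (h : T.src α = T.tgt β) :
    T.vcomp α β + γ = T.vcomp (α + γ) (β + T.vid (T.src γ)) := by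
  conv_lhs => rw [← T.vcomp_vid γ]
  rw [← T.interchange α γ β (T.vid (T.src γ)) h (T.tgt_vid _).symm]

end Helpers2

/-- For all `m, n ≥ 1` and any morphism `a : A → B`,
`Γ(mn)_a = (m·1_B) Γ(n)_a ∘ Γ(m)_a (n·1_A)`. -/
theorem stmt6 {Obj : Type u} {Hom : Obj → Obj → Type v} {Trk : Obj → Obj → Type w}
    [∀ A B : Obj, AddCommGroup (Hom A B)] [∀ A B : Obj, AddCommGroup (Trk A B)]
    (T : LLTrackCat Obj Hom Trk) (L : LinTracks T)
    {A B : Obj} (a : Hom A B) (m n : ℕ) (hm : 1 ≤ m) (hn : 1 ≤ n) :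
    GN T L a (m * n)
      = T.vcomp (T.wl (m • T.one B) (GN T L a n)) (T.wr (GN T L a m) (n • T.one A)) := by
  induction m, hm using Nat.le_induction with
  | base =>
    rw [one_mul, one_smul, T.wl_one]
    have : T.wr (GN T L a 1) (n • T.one A) = T.vid (T.comp a (n • T.one A)) := by
      show T.wr (T.vid a) _ = _
      rw [T.wr_vid]
    rw [this, ← src_GN T L a n, T.vcomp_vid]
  | succ m hm ih =>
    have hmn : 1 ≤ m * n := Nat.one_le_iff_ne_zero.mpr (by positivity)
    rw [show (m + 1) * n = m * n + n by ring, gn_add T L a (m * n) n hmn hn, ih]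
    -- expand the right hand side
    rw [succ_nsmul, T.wl_add_left, T.wl_one]
    rw [GN_succ T L a m hm, T.wr_vcomp _ _ _
      (by rw [T.src_add, src_GN, T.src_vid, L.tgt_Γ]),
      T.wr_add_left, T.wr_vid, T.comp_one, ← L.precomp,
      LL_comp_smul_one, T.one_comp, smul_smul]
    -- expand GN n = GN n ∘ id on the left
    rw [vcomp_add_right T _ _ _
      (by rw [T.src_wl, src_GN, T.tgt_wr, tgt_GN, LL_comp_smul_one, LL_comp_smul_left]),
      src_GN]
    rw [T.vcomp_assoc _ _ _
      (by rw [T.src_add, T.src_wl, src_GN, T.tgt_add, T.tgt_wr,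
        tgt_GN, T.tgt_vid, LL_comp_smul_one, LL_comp_smul_left])
      (by rw [T.src_add, T.src_wr, T.src_vid, src_GN, L.tgt_Γ, T.comp_assoc,
        LL_comp_smul_one, smul_smul])]
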